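/- The B^r seminorm is a norm on the space of Dirac k-chains in ℝⁿ: if A is a nonzero Dirac k-chain then ‖A‖_{B^r} > 0, for every r ≥ 0. -/

import Mathlib

noncomputable section

open Finsupp Filter

variable {E W : Type*} [NormedAddCommGroup E] [NormedSpace ℝ E]
  [NormedAddCommGroup W] [NormedSpace ℝ W]

/-- Translation of a Dirac chain through the vector `u`. -/
def transl (u : E) (A : E →₀ W) : E →₀ W := Finsupp.mapDomain (· + u) A

/-- The difference operator `Δ_u = T_u - I`. -/
def del (u : E) (A : E →₀ W) : E →₀ W := transl u A - A

/-- Iterated difference chain along a list of vectors. -/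
def diff : List E → (E →₀ W) → (E →₀ W)
  | [], A => A
  | u :: σ, A => del u (diff σ A)

/-- The product of the norms of the vectors in the list `σ`. -/
def lnorm (σ : List E) : ℝ := (σ.map norm).prod

/-- Costs of representations of `A` as sums of `j`-difference chains with `j ≤ r`. -/
def reps (r : ℕ) (A : E →₀ W) : Set ℝ :=
  {c | ∃ (m : ℕ) (σ : Fin m → List E) (p : Fin m → E) (α : Fin m → W),
      (∀ i, (σ i).length ≤ r) ∧
      A = ∑ i, diff (σ i) (Finsupp.single (p i) (α i)) ∧
      c = ∑ i, lnorm (σ i) * ‖α i‖}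

/-- The `B^r` norm of a Dirac chain. -/
def Bnorm (r : ℕ) (A : E →₀ W) : ℝ := sInf (reps r A)

/-- `M` is a `B^r`-bound for the cochain (differential form) `ω`. -/
def IsFormBound (r : ℕ) (ω : (E →₀ W) →ₗ[ℝ] ℝ) (M : ℝ) : Prop :=
  ∀ (σ : List E) (p : E) (α : W), σ.length ≤ r →
    |ω (diff σ (Finsupp.single p α))| ≤ M * lnorm σ * ‖α‖

/-- The `B^r` norm of a differential form. -/
def formNorm (r : ℕ) (ω : (E →₀ W) →ₗ[ℝ] ℝ) : ℝ :=
  sInf {M | 0 ≤ M ∧ IsFormBound r ω M}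

/-! ### Auxiliary material for the proof -/

open scoped ContDiff

section FunDiff

variable {F : Type} [NormedAddCommGroup F] [NormedSpace ℝ F]

/-- Function-level difference operator. -/
def fdel {E : Type} [NormedAddCommGroup E] [NormedSpace ℝ E]
    (u : E) (g : E → F) : E → F := fun x => g (x + u) - g x

/-- Function-level iterated difference. -/
def fdif {E : Type} [NormedAddCommGroup E] [NormedSpace ℝ E] :
    List E → (E → F) → (E → F)
  | [], g => g
  | u :: σ, g => fdel u (fdif σ g)

variable {E : Type} [NormedAddCommGroup E] [NormedSpace ℝ E]

lemma contDiff_comp_add (u : E) {g : E → F} (hg : ContDiff ℝ ∞ g) :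
    ContDiff ℝ ∞ fun x => g (x + u) :=
  hg.comp (contDiff_id.add contDiff_const)

lemma contDiff_fdel (u : E) {g : E → F} (hg : ContDiff ℝ ∞ g) : ContDiff ℝ ∞ (fdel u g) :=
  (contDiff_comp_add u hg).sub hg

lemma contDiff_fdif (σ : List E) {g : E → F} (hg : ContDiff ℝ ∞ g) :
    ContDiff ℝ ∞ (fdif σ g) := by
  induction σ with
  | nil => exact hg
  | cons u σ ih => exact contDiff_fdel u ih

lemma fderiv_comp_add' (u : E) {g : E → F} (hg : ContDiff ℝ ∞ g) (x : E) :
    fderiv ℝ (fun y => g (y + u)) x = fderiv ℝ g (x + u) := by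
  have h1 : HasFDerivAt (fun y : E => y + u) (ContinuousLinearMap.id ℝ E) x :=
    (hasFDerivAt_id x).add_const u
  have h2 : HasFDerivAt g (fderiv ℝ g (x + u)) (x + u) :=
    (hg.differentiable (by simp) (x + u)).hasFDerivAt
  have := (h2.comp x h1).fderiv
  simpa [ContinuousLinearMap.comp_id, Function.comp_def] using this

lemma fderiv_fdel (u : E) {g : E → F} (hg : ContDiff ℝ ∞ g) (x : E) :
    fderiv ℝ (fdel u g) x = fdel u (fderiv ℝ g) x := by
  have hd1 : DifferentiableAt ℝ (fun y => g (y + u)) x :=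
    ((contDiff_comp_add u hg).differentiable (by simp)) x
  have hd2 : DifferentiableAt ℝ g x := (hg.differentiable (by simp)) x
  show fderiv ℝ (fun y => g (y + u) - g y) x = _
  rw [fderiv_fun_sub hd1 hd2, fderiv_comp_add' u hg x]
  rfl

lemma fderiv_fdif (σ : List E) {g : E → F} (hg : ContDiff ℝ ∞ g) (x : E) :
    fderiv ℝ (fdif σ g) x = fdif σ (fderiv ℝ g) x := by
  induction σ generalizing x with
  | nil => rfl
  | cons u σ ih =>
    have h1 : fderiv ℝ (fdif (u :: σ) g) x = fdel u (fderiv ℝ (fdif σ g)) x :=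
      fderiv_fdel u (contDiff_fdif σ hg) x
    rw [h1]
    show fderiv ℝ (fdif σ g) (x + u) - fderiv ℝ (fdif σ g) x = _
    rw [ih (x + u), ih x]
    rfl

lemma fdif_comp_add (σ : List E) {F : Type} [NormedAddCommGroup F] [NormedSpace ℝ F]
    (g : E → F) (u : E) (p : E) :
    fdif σ (fun x => g (x + u)) p = fdif σ g (p + u) := by
  induction σ generalizing p with
  | nil => rfl
  | cons v σ ih =>
    show fdif σ (fun x => g (x + u)) (p + v) - fdif σ (fun x => g (x + u)) p = _
    rw [ih (p + v), ih p]
    show _ = fdif σ g (p + u + v) - fdif σ g (p + u)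
    rw [add_right_comm]

lemma key_bound : ∀ (σ : List E) (F : Type) [NormedAddCommGroup F] [NormedSpace ℝ F]
    (f : E → F) (C : ℝ), ContDiff ℝ ∞ f →
    (∀ x, ‖iteratedFDeriv ℝ σ.length f x‖ ≤ C) → ∀ p, ‖fdif σ f p‖ ≤ lnorm σ * C := by
  intro σ
  induction σ with
  | nil =>
    intro F _ _ f C hf hC p
    simpa [fdif, lnorm, norm_iteratedFDeriv_zero] using hC p
  | cons u σ ih =>
    intro F _ _ f C hf hC p
    have hf' : ContDiff ℝ ∞ (fderiv ℝ f) := hf.fderiv_right (by exact_mod_cast le_top)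
    have hC' : ∀ x, ‖iteratedFDeriv ℝ σ.length (fderiv ℝ f) x‖ ≤ C := by
      intro x; rw [norm_iteratedFDeriv_fderiv]; exact hC x
    have hbound : ∀ x, ‖fderiv ℝ (fdif σ f) x‖ ≤ lnorm σ * C := by
      intro x
      rw [fderiv_fdif σ hf x]
      exact ih (E →L[ℝ] F) (fderiv ℝ f) C hf' hC' x
    have hdiff : ∀ x ∈ (Set.univ : Set E), DifferentiableAt ℝ (fdif σ f) x :=
      fun x _ => ((contDiff_fdif σ hf).differentiable (by simp)) x
    have hm := convex_univ.norm_image_sub_le_of_norm_fderiv_le hdiff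
      (fun x _ => hbound x) (Set.mem_univ p) (Set.mem_univ (p + u))
    calc ‖fdif (u :: σ) f p‖ = ‖fdif σ f (p + u) - fdif σ f p‖ := rfl
      _ ≤ lnorm σ * C * ‖p + u - p‖ := hm
      _ = lnorm (u :: σ) * C := by
          simp [lnorm]; ring

end FunDiff

section Bridge

/-- The cochain associated to a scalar function `f` and a functional `φ`. -/
def ell (f : E → ℝ) (φ : W →ₗ[ℝ] ℝ) : (E →₀ W) →ₗ[ℝ] ℝ :=
  Finsupp.lsum ℝ fun x => f x • φ

lemma ell_apply (f : E → ℝ) (φ : W →ₗ[ℝ] ℝ) (B : E →₀ W) :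
    ell f φ B = B.sum fun x w => f x * φ w := by
  simp [ell, Finsupp.lsum_apply, Finsupp.sum]

lemma ell_single (f : E → ℝ) (φ : W →ₗ[ℝ] ℝ) (p : E) (α : W) :
    ell f φ (Finsupp.single p α) = f p * φ α := by
  simp [ell]

lemma ell_transl (f : E → ℝ) (φ : W →ₗ[ℝ] ℝ) (u : E) (B : E →₀ W) :
    ell f φ (transl u B) = ell (fun x => f (x + u)) φ B := by
  rw [ell_apply, ell_apply, transl,
    Finsupp.sum_mapDomain_index_inj (add_left_injective u)]

lemma ell_diff {E : Type} [NormedAddCommGroup E] [NormedSpace ℝ E]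
    (σ : List E) : ∀ (f : E → ℝ) (φ : W →ₗ[ℝ] ℝ) (p : E) (α : W),
    ell f φ (diff σ (Finsupp.single p α)) = fdif σ f p * φ α := by
  induction σ with
  | nil => intro f φ p α; exact ell_single f φ p α
  | cons u σ ih =>
    intro f φ p α
    show ell f φ (del u (diff σ (Finsupp.single p α))) = _
    rw [del, map_sub, ell_transl, ih, ih, fdif_comp_add]
    show _ = (fdif σ f (p + u) - fdif σ f p) * φ α
    ring

end Bridge

lemma lnorm_nonneg {E : Type*} [NormedAddCommGroup E] (σ : List E) : 0 ≤ lnorm σ := by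
  apply List.prod_nonneg
  intro a ha
  simp only [List.mem_map] at ha
  obtain ⟨u, -, rfl⟩ := ha
  exact norm_nonneg u

lemma reps_nonempty (r : ℕ) (A : E →₀ W) : (reps r A).Nonempty := by
  classical
  refine ⟨∑ i : Fin A.support.card,
      lnorm ([] : List E) * ‖A ((A.support.equivFin.symm i) : E)‖, ?_⟩
  refine ⟨A.support.card, fun _ => [], fun i => ((A.support.equivFin.symm i) : E),
    fun i => A ((A.support.equivFin.symm i) : E), fun i => by simp, ?_, rfl⟩
  have h2 : ∀ i : Fin A.support.card,
      diff ([] : List E) (Finsupp.single ((A.support.equivFin.symm i : A.support) : E)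
        (A ((A.support.equivFin.symm i : A.support) : E)))
      = Finsupp.single ((A.support.equivFin.symm i : A.support) : E)
        (A ((A.support.equivFin.symm i : A.support) : E)) := fun i => rfl
  calc A = ∑ x ∈ A.support, Finsupp.single x (A x) := (Finsupp.sum_single A).symm
    _ = ∑ x : A.support, Finsupp.single (x : E) (A (x : E)) :=
        (Finset.sum_coe_sort A.support _).symm
    _ = ∑ i : Fin A.support.card, Finsupp.single ((A.support.equivFin.symm i : A.support) : E)
        (A ((A.support.equivFin.symm i : A.support) : E)) :=
        (Equiv.sum_comp A.support.equivFin.symm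
          (fun x : A.support => Finsupp.single (x : E) (A (x : E)))).symm
    _ = _ := by simp only [h2]

/-- The `B^r` seminorm is a norm on Dirac `k`-chains in `ℝⁿ`:
if `A ≠ 0` then `‖A‖_{B^r} > 0`, for every `r ≥ 0`. -/
theorem Bnorm_pos_of_ne_zero {n : ℕ} {W : Type*}
    [NormedAddCommGroup W] [NormedSpace ℝ W] (r : ℕ)
    (A : (EuclideanSpace ℝ (Fin n)) →₀ W) (hA : A ≠ 0) :
    0 < Bnorm r A := by
  classical
  obtain ⟨q, hq⟩ := Finsupp.support_nonempty_iff.mpr hA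
  have hAq : A q ≠ 0 := Finsupp.mem_support_iff.mp hq
  obtain ⟨r0, hr0pos, hr0⟩ : ∃ r0 : ℝ, 0 < r0 ∧
      ∀ x ∈ A.support, x ≠ q → r0 ≤ dist x q := by
    by_cases hs : (A.support.erase q).Nonempty
    · refine ⟨(A.support.erase q).inf' hs (fun x => dist x q), ?_, ?_⟩
      · rw [Finset.lt_inf'_iff]
        intro x hx
        exact dist_pos.mpr (Finset.ne_of_mem_erase hx)
      · intro x hx hxq
        exact Finset.inf'_le _ (Finset.mem_erase.mpr ⟨hxq, hx⟩)
    · exact ⟨1, one_pos, fun x hx hxq => absurd ⟨x, Finset.mem_erase.mpr ⟨hxq, hx⟩⟩ hs⟩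
  let β : ContDiffBump q := ⟨r0 / 2, 2 * r0 / 3, by positivity, by linarith⟩
  have hβsmooth : ContDiff ℝ ∞ ⇑β := β.contDiff
  have hβq : β q = 1 := β.one_of_mem_closedBall (Metric.mem_closedBall_self (by positivity))
  have hβzero : ∀ x ∈ A.support, x ≠ q → β x = 0 := by
    intro x hx hxq
    have hout : β.rOut = 2 * r0 / 3 := rfl
    exact β.zero_of_le_dist (le_trans (by rw [hout]; linarith) (hr0 x hx hxq))
  have hCj : ∀ j : ℕ, ∃ Cj : ℝ, ∀ x, ‖iteratedFDeriv ℝ j ⇑β x‖ ≤ Cj := by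
    intro j
    obtain ⟨Cj, hCj⟩ :=
      ((hβsmooth.continuous_iteratedFDeriv (by exact_mod_cast le_top)).norm).bounded_above_of_compact_support
        (β.hasCompactSupport.iteratedFDeriv j).norm
    exact ⟨Cj, fun x => by simpa using hCj x⟩
  choose Cf hCf using hCj
  have hne : (Finset.range (r + 1)).Nonempty := Finset.nonempty_range_add_one
  set C : ℝ := (Finset.range (r + 1)).sup' hne Cf with hC
  have hCle : ∀ j, j ≤ r → ∀ x, ‖iteratedFDeriv ℝ j ⇑β x‖ ≤ C := by
    intro j hj x
    exact le_trans (hCf j x) (Finset.le_sup' Cf (Finset.mem_range.mpr (by omega)))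
  have hCpos : 0 < C := by
    have h1 : (1 : ℝ) ≤ C := by
      have := hCle 0 (Nat.zero_le r) q
      rwa [norm_iteratedFDeriv_zero, hβq, norm_one] at this
    linarith
  obtain ⟨φ, hφnorm, hφval⟩ := exists_dual_vector ℝ (A q) (norm_ne_zero_iff.mpr hAq)
  set L : ((EuclideanSpace ℝ (Fin n)) →₀ W) →ₗ[ℝ] ℝ := ell (⇑β) (φ : W →ₗ[ℝ] ℝ) with hL
  have hLA : L A = ‖A q‖ := by
    rw [hL, ell_apply, Finsupp.sum]
    rw [Finset.sum_eq_single_of_mem q hq]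
    · simp only [hβq, one_mul, ContinuousLinearMap.coe_coe]
      rw [hφval]; norm_num
    · intro x hx hxq
      simp [hβzero x hx hxq]
  have hkey : ∀ c ∈ reps r A, ‖A q‖ / C ≤ c := by
    rintro c ⟨m, σ, p, α, hlen, hrep, rfl⟩
    rw [div_le_iff₀ hCpos]
    have hterm : ∀ i : Fin m, |L (diff (σ i) (Finsupp.single (p i) (α i)))|
        ≤ lnorm (σ i) * ‖α i‖ * C := by
      intro i
      rw [hL, ell_diff, abs_mul]
      have h1 : |fdif (σ i) (⇑β) (p i)| ≤ lnorm (σ i) * C := by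
        have := key_bound (σ i) ℝ (⇑β) C hβsmooth (hCle _ (hlen i)) (p i)
        simpa using this
      have h2 : |(φ : W →ₗ[ℝ] ℝ) (α i)| ≤ ‖α i‖ := by
        have := φ.le_opNorm (α i)
        rw [hφnorm, one_mul] at this
        simpa using this
      calc |fdif (σ i) (⇑β) (p i)| * |(φ : W →ₗ[ℝ] ℝ) (α i)|
          ≤ (lnorm (σ i) * C) * ‖α i‖ :=
            mul_le_mul h1 h2 (abs_nonneg _) (mul_nonneg (lnorm_nonneg _) hCpos.le)
        _ = lnorm (σ i) * ‖α i‖ * C := by ring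
    calc ‖A q‖ = |L A| := by rw [hLA, abs_of_nonneg (norm_nonneg _)]
      _ = |∑ i : Fin m, L (diff (σ i) (Finsupp.single (p i) (α i)))| := by
          rw [hrep, map_sum]
      _ ≤ ∑ i : Fin m, |L (diff (σ i) (Finsupp.single (p i) (α i)))| :=
          Finset.abs_sum_le_sum_abs _ _
      _ ≤ ∑ i : Fin m, lnorm (σ i) * ‖α i‖ * C :=
          Finset.sum_le_sum fun i _ => hterm i
      _ = (∑ i : Fin m, lnorm (σ i) * ‖α i‖) * C := by rw [Finset.sum_mul]
  have hpos : 0 < ‖A q‖ / C := div_pos (norm_pos_iff.mpr hAq) hCpos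
  exact lt_of_lt_of_le hpos (le_csInf (reps_nonempty r A) hkey)
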